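/- Let V be an n-dimensional vector space, n ≥ 2, over a division ring R such that for any two n-simplices {P₁,…,P_{n+1}} and {P'₁,…,P'_{n+1}} in P(V) there is a unique element of PGL(V) with Pᵢ ↦ P'ᵢ for all i. Then R is commutative. -/

import Mathlib

/-- A finite set of lines is *independent* if some choice of nonzero representative
vectors is linearly independent. -/
def IndepLines (K : Type*) {V : Type*} [DivisionRing K] [AddCommGroup V] [Module K V]
    (𝒳 : Set (Submodule K V)) : Prop :=
  ∃ x : 𝒳 → V, (∀ P : 𝒳, x P ∈ (P : Submodule K V) ∧ x P ≠ 0) ∧ LinearIndependent K x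

/-- An `(m+1)`-element subset of `P(V)` is an *`m`-simplex` if it is not independent
but every `m`-element subset of it is independent. -/
def IsSimplex (K : Type*) {V : Type*} [DivisionRing K] [AddCommGroup V] [Module K V]
    (m : ℕ) (𝒳 : Set (Submodule K V)) : Prop :=
  𝒳.Finite ∧ 𝒳.ncard = m + 1 ∧ (∀ P ∈ 𝒳, Module.finrank K P = 1) ∧
    ¬ IndepLines K 𝒳 ∧ ∀ 𝒴 ⊆ 𝒳, 𝒴.ncard = m → IndepLines K 𝒴

section Aux

open Submodule

variable {K V : Type*} [DivisionRing K] [AddCommGroup V] [Module K V] {n : ℕ}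

noncomputable def repVec (e : Module.Basis (Fin n) K V) (i : Fin (n + 1)) : V :=
  if h : (i : ℕ) < n then e ⟨i, h⟩ else ∑ k, e k

lemma repVec_indep (e : Module.Basis (Fin n) K V) (j : Fin (n + 1)) :
    LinearIndependent K (fun i : {i : Fin (n + 1) // i ≠ j} => repVec e i) := by
  classical
  by_cases hj : (j : ℕ) < n
  · set j' : Fin n := ⟨j, hj⟩ with hj'
    set w : V := ∑ k, e k with hw
    set T : V →ₗ[K] V := e.constr ℕ (Function.update e j' w) with hT
    set S : V →ₗ[K] V := e.constr ℕ (Function.update e j' ((2:K) • e j' - w)) with hS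
    have hTapp : ∀ i, T (e i) = Function.update e j' w i := fun i => by
      rw [hT, Module.Basis.constr_basis]
    have hSapp : ∀ i, S (e i) = Function.update e j' ((2:K) • e j' - w) i := fun i => by
      rw [hS, Module.Basis.constr_basis]
    have hST : ∀ i, S (T (e i)) = e i := by
      intro i
      by_cases hi : i = j'
      · rw [hTapp, hi, Function.update_self, hw, map_sum]
        simp_rw [hSapp]
        rw [Finset.sum_update_of_mem (Finset.mem_univ _)]
        have hsub : ∑ k ∈ Finset.univ \ {j'}, e k = w - e j' := by
          rw [Finset.sum_sdiff_eq_sub (Finset.subset_univ _), Finset.sum_singleton, hw]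
        rw [hsub, two_smul]
        abel
      · rw [hTapp, Function.update_of_ne hi, hSapp, Function.update_of_ne hi]
    have hinjT : Function.Injective T := by
      have hcomp : S.comp T = LinearMap.id := by
        apply e.ext; intro i; simpa using hST i
      have hli : ∀ v, S (T v) = v := fun v => by
        simpa using DFunLike.congr_fun hcomp v
      exact Function.LeftInverse.injective hli
    set g : {i : Fin (n + 1) // i ≠ j} → Fin n :=
      fun i => if h : ((i : Fin (n + 1)) : ℕ) < n then ⟨(i : Fin (n + 1)), h⟩ else j'
      with hg
    have hgval : ∀ i : {i : Fin (n + 1) // i ≠ j},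
        ((g i : Fin n) : ℕ) = if ((i : Fin (n + 1)) : ℕ) < n
          then ((i : Fin (n + 1)) : ℕ) else (j : ℕ) := by
      intro i
      simp only [hg]
      split_ifs with h
      · rfl
      · rfl
    have hval_ne : ∀ i : {i : Fin (n + 1) // i ≠ j},
        ((i : Fin (n + 1)) : ℕ) ≠ (j : ℕ) := by
      rintro ⟨i, hi⟩ h
      exact hi (Fin.ext h)
    have hginj : Function.Injective g := by
      intro x y hxy
      have hx := hgval x
      have hy := hgval y
      rw [hxy] at hx
      have hxv := hval_ne x
      have hyv := hval_ne y
      have hxlt := (x : Fin (n + 1)).isLt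
      have hylt := (y : Fin (n + 1)).isLt
      apply Subtype.ext; apply Fin.ext
      rw [hx] at hy
      split_ifs at hy <;> omega
    have key : (fun i : {i : Fin (n + 1) // i ≠ j} => repVec e i) = T ∘ (e ∘ g) := by
      funext i
      simp only [Function.comp]
      rw [repVec]
      split_ifs with h
      · have hgi : g i = ⟨((i : Fin (n + 1)) : ℕ), h⟩ := by
          simp only [hg]; rw [dif_pos h]
        rw [hgi, hTapp, Function.update_of_ne]
        intro hcon
        have h2 : ((⟨((i : Fin (n + 1)) : ℕ), h⟩ : Fin n) : ℕ) = (j' : ℕ) :=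
          congrArg (Fin.val (n := n)) hcon
        exact hval_ne i h2
      · have hgi : g i = j' := by simp only [hg]; rw [dif_neg h]
        rw [hgi, hTapp, Function.update_self, hw]
    rw [key]
    exact ((e.linearIndependent.comp g hginj).map' T (LinearMap.ker_eq_bot.mpr hinjT))
  · have hlt : ∀ i : {i : Fin (n + 1) // i ≠ j}, ((i : Fin (n + 1)) : ℕ) < n := by
      rintro ⟨i, hi⟩
      have h1 : (i : ℕ) ≠ (j : ℕ) := fun h => hi (Fin.ext h)
      have h2 := i.isLt
      have h3 := j.isLt
      simp only [] at h1 ⊢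
      omega
    set g : {i : Fin (n + 1) // i ≠ j} → Fin n := fun i => ⟨(i : Fin (n + 1)), hlt i⟩
      with hg
    have hginj : Function.Injective g := by
      intro x y hxy
      apply Subtype.ext; apply Fin.ext
      exact congrArg (Fin.val (n := n)) hxy
    have key : (fun i : {i : Fin (n + 1) // i ≠ j} => repVec e i) = e ∘ g := by
      funext i
      simp only [Function.comp]
      rw [repVec, dif_pos (hlt i), hg]
    rw [key]
    exact e.linearIndependent.comp g hginj

lemma repVec_ne_zero (e : Module.Basis (Fin n) K V) (h1 : 1 ≤ n) (i : Fin (n + 1)) :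
    repVec e i ≠ 0 := by
  have : ∃ j : Fin (n + 1), i ≠ j := by
    refine ⟨if h : (i : ℕ) = 0 then ⟨1, by omega⟩ else ⟨0, by omega⟩, ?_⟩
    split_ifs with h <;>
      (intro hc; have hc' := congrArg Fin.val hc; simp only [] at hc'; omega)
  obtain ⟨j, hj⟩ := this
  exact (repVec_indep e j).ne_zero ⟨i, hj⟩

end Aux

/-- Proposition 1, converse: If for any two `n`-simplices in `P(V)`
there is a unique element of `PGL(V)` matching them up, then the division ring of
scalars is commutative. -/
theorem stmt12 {K V : Type*} [DivisionRing K] [AddCommGroup V] [Module K V]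
    [FiniteDimensional K V] {n : ℕ} (hn : Module.finrank K V = n) (h2 : 2 ≤ n)
    (huniq : ∀ P P' : Fin (n + 1) → Submodule K V,
      Function.Injective P → Function.Injective P' →
      IsSimplex K n (Set.range P) → IsSimplex K n (Set.range P') →
      ∃ u : V ≃ₗ[K] V,
        (∀ i, Submodule.map (u : V →ₗ[K] V) (P i) = P' i) ∧
        ∀ u' : V ≃ₗ[K] V, (∀ i, Submodule.map (u' : V →ₗ[K] V) (P i) = P' i) →
          ∀ L : Submodule K V, Module.finrank K L = 1 →
            Submodule.map (u' : V →ₗ[K] V) L = Submodule.map (u : V →ₗ[K] V) L) :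
    ∀ a b : K, a * b = b * a := by
  classical
  intro a b
  by_cases hb : b = 0
  · simp [hb]
  have h1 : 1 ≤ n := by omega
  -- a basis indexed by `Fin n`
  let e : Module.Basis (Fin n) K V := (Module.finBasis K V).reindex (finCongr hn)
  -- the standard simplex
  set P : Fin (n + 1) → Submodule K V := fun i => K ∙ repVec e i with hP
  have hrep_mem : ∀ i, repVec e i ∈ P i := fun i => Submodule.mem_span_singleton_self _
  have hrep_ne : ∀ i, repVec e i ≠ 0 := repVec_ne_zero e h1
  -- injectivity of `P`
  have hPinj : Function.Injective P := by
    intro i j hij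
    by_contra hne
    have hvij : (i : ℕ) ≠ (j : ℕ) := fun h => hne (Fin.ext h)
    obtain ⟨m, hm, hmi, hmj⟩ : ∃ m, m < n + 1 ∧ m ≠ (i : ℕ) ∧ m ≠ (j : ℕ) := by
      refine ⟨if 0 = (i : ℕ) ∨ 0 = (j : ℕ) then
        (if 1 = (i : ℕ) ∨ 1 = (j : ℕ) then 2 else 1) else 0, ?_, ?_, ?_⟩ <;>
        (split_ifs <;> omega)
    set l : Fin (n + 1) := ⟨m, hm⟩ with hl
    have hil : i ≠ l := fun h => hmi (congrArg Fin.val h).symm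
    have hjl : j ≠ l := fun h => hmj (congrArg Fin.val h).symm
    have hmem : repVec e i ∈ Submodule.span K {repVec e j} := by
      have : repVec e i ∈ P i := hrep_mem i
      rw [hij] at this
      exact this
    have hind := (repVec_indep e l).notMem_span_image
      (s := {(⟨j, hjl⟩ : {i : Fin (n + 1) // i ≠ l})}) (x := ⟨i, hil⟩)
      (by simp [Subtype.ext_iff]; intro h; exact hne (Fin.ext (congrArg Fin.val h)))
    rw [Set.image_singleton] at hind
    exact hind hmem
  -- `Set.range P` is an `n`-simplex
  have hsimplex : IsSimplex K n (Set.range P) := by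
    refine ⟨Set.finite_range P, ?_, ?_, ?_, ?_⟩
    · rw [← Nat.card_coe_set_eq, Nat.card_range_of_injective hPinj,
        Nat.card_eq_fintype_card, Fintype.card_fin]
    · rintro Q ⟨i, rfl⟩
      exact finrank_span_singleton (hrep_ne i)
    · rintro ⟨x, hx, hli⟩
      haveI : Fintype ↥(Set.range P) := Set.fintypeRange P
      have hcard : Fintype.card ↥(Set.range P) = n + 1 := by
        rw [Set.card_range_of_injective hPinj, Fintype.card_fin]
      have := LinearIndependent.fintype_card_le_finrank hli
      rw [hcard, hn] at this
      omega
    · intro 𝒴 h𝒴 hcard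
      have hfin : 𝒴.Finite := (Set.finite_range P).subset h𝒴
      haveI : Fintype ↥𝒴 := hfin.fintype
      have hcard' : Fintype.card ↥𝒴 = n := by
        rw [← Nat.card_eq_fintype_card, Nat.card_coe_set_eq, hcard]
      set eqv := Equiv.ofInjective P hPinj with heqv
      set idx : ↥𝒴 → Fin (n + 1) := fun Q => eqv.symm ⟨(Q : Submodule K V), h𝒴 Q.2⟩
        with hidx
      have hPidx : ∀ Q : ↥𝒴, P (idx Q) = (Q : Submodule K V) := by
        intro Q
        have := Equiv.apply_ofInjective_symm hPinj (⟨(Q : Submodule K V), h𝒴 Q.2⟩)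
        exact this
      have hidxinj : Function.Injective idx := by
        intro Q R h
        have := congrArg P h
        rw [hPidx Q, hPidx R] at this
        exact Subtype.ext this
      have hnotsurj : ¬ Function.Surjective idx := by
        intro hsurj
        have := Fintype.card_le_of_surjective idx hsurj
        rw [hcard', Fintype.card_fin] at this
        omega
      rw [Function.Surjective] at hnotsurj
      push_neg at hnotsurj
      obtain ⟨j, hj⟩ := hnotsurj
      set g : ↥𝒴 → {i : Fin (n + 1) // i ≠ j} := fun Q => ⟨idx Q, hj Q⟩ with hgdef
      have hginj : Function.Injective g := by
        intro Q R h
        exact hidxinj (congrArg Subtype.val h)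
      refine ⟨fun Q => repVec e (idx Q), ?_, ?_⟩
      · intro Q
        refine ⟨?_, hrep_ne _⟩
        rw [← hPidx Q]
        exact hrep_mem _
      · have : (fun Q : ↥𝒴 => repVec e (idx Q)) =
            (fun i : {i : Fin (n + 1) // i ≠ j} => repVec e i) ∘ g := rfl
        rw [this]
        exact (repVec_indep e j).comp g hginj
  -- the linear equivalence `v ↦ ∑ (coords v) • b • e i`
  set T : V →ₗ[K] V := e.constr ℕ (fun i => b • e i) with hTdef
  set S : V →ₗ[K] V := e.constr ℕ (fun i => b⁻¹ • e i) with hSdef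
  have hu' : S.comp T = LinearMap.id ∧ T.comp S = LinearMap.id := by
    constructor <;>
      (apply e.ext; intro i;
        simp [hTdef, hSdef, Module.Basis.constr_basis, smul_smul,
          inv_mul_cancel₀ hb, mul_inv_cancel₀ hb])
  set u' : V ≃ₗ[K] V := LinearEquiv.ofLinear T S hu'.2 hu'.1 with hu'def
  have hu'app : ∀ v, u' v = T v := fun v => rfl
  -- `u'` scales the representative vectors by `b`
  have hu'rep : ∀ i, (u' : V →ₗ[K] V) (repVec e i) = b • repVec e i := by
    intro i
    show T (repVec e i) = b • repVec e i
    unfold repVec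
    split_ifs with h
    · simp [hTdef, Module.Basis.constr_basis]
    · rw [map_sum, Finset.smul_sum]
      congr 1
      funext k
      simp [hTdef, Module.Basis.constr_basis]
  -- `u'` fixes the simplex
  have hmap_span : ∀ (f : V →ₗ[K] V) (v : V),
      Submodule.map f (K ∙ v) = K ∙ f v := by
    intro f v
    rw [Submodule.map_span, Set.image_singleton]
  have hu'P : ∀ i, Submodule.map (u' : V →ₗ[K] V) (P i) = P i := by
    intro i
    rw [hP, hmap_span, hu'rep i]
    exact Submodule.span_singleton_smul_eq (IsUnit.mk0 b hb) _
  -- apply uniqueness with `id` and `u'`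
  obtain ⟨u, hu, huu⟩ := huniq P P hPinj hPinj hsimplex hsimplex
  have hid : ∀ i, Submodule.map ((LinearEquiv.refl K V : V ≃ₗ[K] V) : V →ₗ[K] V) (P i)
      = P i := by
    intro i; simp
  -- the test line
  set i0 : Fin n := ⟨0, by omega⟩ with hi0
  set i1 : Fin n := ⟨1, by omega⟩ with hi1
  have hi01 : i0 ≠ i1 := by
    intro h; have := congrArg Fin.val h; simp [hi0, hi1] at this
  set v : V := e i0 + a • e i1 with hv
  have hvne : v ≠ 0 := by
    intro hcon
    have := congrArg (fun w => (e.repr w) i0) hcon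
    simp [hv, Finsupp.single_apply, hi01, Ne.symm hi01] at this
  set L : Submodule K V := K ∙ v with hL
  have hLrank : Module.finrank K L = 1 := finrank_span_singleton hvne
  have h1map := huu (LinearEquiv.refl K V) hid L hLrank
  have h2map := huu u' hu'P L hLrank
  have hfix : Submodule.map (u' : V →ₗ[K] V) L = L := by
    rw [h2map, ← h1map]
    simp
  -- compute `u' v`
  have hu'v : (u' : V →ₗ[K] V) v = b • e i0 + (a * b) • e i1 := by
    show T v = _
    rw [hv, map_add, map_smul]
    simp [hTdef, Module.Basis.constr_basis, smul_smul]
  have hmem : (b • e i0 + (a * b) • e i1) ∈ L := by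
    rw [← hu'v, ← hfix]
    exact Submodule.mem_map_of_mem (Submodule.mem_span_singleton_self v)
  rw [hL, Submodule.mem_span_singleton] at hmem
  obtain ⟨c, hc⟩ := hmem
  have hc' : c • e i0 + (c * a) • e i1 = b • e i0 + (a * b) • e i1 := by
    rw [← hc, hv, smul_add, smul_smul]
  have h0 := congrArg (fun w => (e.repr w) i0) hc'
  have h1 := congrArg (fun w => (e.repr w) i1) hc'
  simp [Finsupp.single_apply, hi01, Ne.symm hi01] at h0 h1
  rw [← h1, h0]
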